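/- Suppose H(·; α_0) attains its minimum over P_k^+ at a unique point f̂_0 (a well separated global minimum). If α_t → α_0 in P_m^+ and for each t the point f̂_t ∈ P_k^+ is a minimizer of H(·; α_t) over P_k^+, then f̂_t → f̂_0. (Corollary 1 of the paper: the optimal pmf f̂(α) is continuous at every α where H(·,α) has a well separated global minimum.) -/

import Mathlib

open Filter Matrix

/-- Corollary 1: if `H(·; α_0)` has a well separated (unique) global minimum at `f̂_0`,
`α_t → α_0` and `f̂_t` minimizes `H(·; α_t)` over `P_k^+`, then `f̂_t → f̂_0`. -/
theorem covariance_field_fhat_continuous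
    (n k m : ℕ) (hn : 1 ≤ n) (hk : 1 ≤ k) (hm : 1 ≤ m)
    (M : Fin k → Fin k → Matrix (Fin n) (Fin n) ℝ)
    (Sig : (Fin k → ℝ) → Fin k → Matrix (Fin n) (Fin n) ℝ)
    (hSig : ∀ f j, Sig f j = ∑ i : Fin k, f i • M i j)
    (hSigPD : ∀ f ∈ stdSimplex ℝ (Fin k), ∀ j : Fin k, (Sig f j).PosDef)
    (C : Fin k → Fin m → Matrix (Fin n) (Fin n) ℝ)
    (hC : ∀ j s, (C j s).PosDef)
    (h : Matrix (Fin n) (Fin n) ℝ → Matrix (Fin n) (Fin n) ℝ → ℝ)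
    (hcont : ContinuousOn
      (fun p : Matrix (Fin n) (Fin n) ℝ × Matrix (Fin n) (Fin n) ℝ => h p.1 p.2)
      {p | p.1.PosDef ∧ p.2.PosDef})
    (H : (Fin k → ℝ) → (Fin m → ℝ) → ℝ)
    (hH : ∀ f α, H f α = ∑ s : Fin m, α s * ∑ j : Fin k, h (Sig f j) (C j s))
    (α : ℕ → Fin m → ℝ) (α₀ : Fin m → ℝ)
    (hα : ∀ t, α t ∈ stdSimplex ℝ (Fin m)) (hα₀ : α₀ ∈ stdSimplex ℝ (Fin m))
    (hαlim : Tendsto α atTop (nhds α₀))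
    (fhat : ℕ → Fin k → ℝ) (fhat₀ : Fin k → ℝ)
    (hfhat : ∀ t, fhat t ∈ stdSimplex ℝ (Fin k))
    (hfhatmin : ∀ t, ∀ g ∈ stdSimplex ℝ (Fin k), H (fhat t) (α t) ≤ H g (α t))
    (hfhat₀ : fhat₀ ∈ stdSimplex ℝ (Fin k))
    (hfhat₀min : ∀ g ∈ stdSimplex ℝ (Fin k), g ≠ fhat₀ → H fhat₀ α₀ < H g α₀) :
    Tendsto fhat atTop (nhds fhat₀) := by

  have hScomp : IsCompact (stdSimplex ℝ (Fin k)) := isCompact_stdSimplex _ _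
  have hSigcont : ∀ j, Continuous fun f : Fin k → ℝ => Sig f j := by
    intro j
    have e : (fun f : Fin k → ℝ => Sig f j) = fun f => ∑ i : Fin k, f i • M i j := by
      funext f; exact hSig f j
    rw [e]
    exact continuous_finset_sum _ fun i _ => (continuous_apply i).smul continuous_const
  have hGcont : ∀ (j : Fin k) (s : Fin m),
      ContinuousOn (fun f : Fin k → ℝ => h (Sig f j) (C j s)) (stdSimplex ℝ (Fin k)) := by
    intro j s
    exact hcont.comp ((hSigcont j).prodMk continuous_const).continuousOn
      (fun f hf => ⟨hSigPD f hf j, hC j s⟩)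
  have hHcont : ContinuousOn (fun p : (Fin k → ℝ) × (Fin m → ℝ) => H p.1 p.2)
      (stdSimplex ℝ (Fin k) ×ˢ (Set.univ : Set (Fin m → ℝ))) := by
    have e : (fun p : (Fin k → ℝ) × (Fin m → ℝ) => H p.1 p.2)
        = fun p => ∑ s : Fin m, p.2 s * ∑ j : Fin k, h (Sig p.1 j) (C j s) := by
      funext p; exact hH p.1 p.2
    rw [e]
    refine continuousOn_finset_sum _ fun s _ => ContinuousOn.mul ?_ ?_
    · exact ((continuous_apply s).comp continuous_snd).continuousOn
    · refine continuousOn_finset_sum _ fun j _ => ?_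
      exact (hGcont j s).comp continuous_fst.continuousOn (fun p hp => hp.1)
  apply tendsto_of_subseq_tendsto
  intro ns hns
  obtain ⟨L, hL, φ, hφ, hconv⟩ := hScomp.tendsto_subseq (fun t => hfhat (ns t))
  refine ⟨φ, ?_⟩
  suffices hL0 : L = fhat₀ by
    rw [hL0] at hconv; exact hconv
  by_contra hne
  have hlt : H fhat₀ α₀ < H L α₀ := hfhat₀min L hL hne
  set β : ℕ → ℕ := fun nn => ns (φ nn) with hβ
  have hβtop : Tendsto β atTop atTop := hns.comp hφ.tendsto_atTop
  have hαβ : Tendsto (fun nn => α (β nn)) atTop (nhds α₀) := hαlim.comp hβtop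
  have h1 : Tendsto (fun nn => H (fhat (β nn)) (α (β nn))) atTop (nhds (H L α₀)) := by
    have hpair : Tendsto (fun nn => ((fhat (β nn)), α (β nn))) atTop
        (nhdsWithin (L, α₀) (stdSimplex ℝ (Fin k) ×ˢ (Set.univ : Set (Fin m → ℝ)))) := by
      apply tendsto_nhdsWithin_of_tendsto_nhds_of_eventually_within
      · exact hconv.prodMk_nhds hαβ
      · exact Filter.Eventually.of_forall fun nn => ⟨hfhat (β nn), trivial⟩
    exact (hHcont (L, α₀) ⟨hL, trivial⟩).tendsto.comp hpair
  have h2 : Tendsto (fun nn => H fhat₀ (α (β nn))) atTop (nhds (H fhat₀ α₀)) := by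
    have hpair : Tendsto (fun nn => ((fhat₀ : Fin k → ℝ), α (β nn))) atTop
        (nhdsWithin (fhat₀, α₀) (stdSimplex ℝ (Fin k) ×ˢ (Set.univ : Set (Fin m → ℝ)))) := by
      apply tendsto_nhdsWithin_of_tendsto_nhds_of_eventually_within
      · exact tendsto_const_nhds.prodMk_nhds hαβ
      · exact Filter.Eventually.of_forall fun nn => ⟨hfhat₀, trivial⟩
    exact (hHcont (fhat₀, α₀) ⟨hfhat₀, trivial⟩).tendsto.comp hpair
  have hle : H L α₀ ≤ H fhat₀ α₀ :=
    le_of_tendsto_of_tendsto' h1 h2 (fun nn => hfhatmin (β nn) fhat₀ hfhat₀)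
  exact absurd hle (not_le.mpr hlt)
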